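/- arXiv:2403.03057 — 2 statements merged into one kernel-verified Lean document; each statement's English description precedes it below -/
import Mathlib

section
/- Correctness of the 3SAT reduction: let φ = C1 ∧ … ∧ Ck be a 3-CNF formula over Boolean variables x1,…,xn, where each clause Cj is a set of three distinct literals. Take lifelines L = {l1,…,lk} (one per clause) and a single message m. For a literal ℓ, let i_ℓ ∈ 𝕀(L) be the seq-composition of the actions lj?m over all indices j such that ℓ occurs in Cj (and ∅ if ℓ occurs in no clause), and let i_φ = seq(alt(i_{x1}, i_{¬x1}), seq(alt(i_{x2}, i_{¬x2}), …, alt(i_{xn}, i_{¬xn})…)). Then φ is satisfiable if and only if the multi-trace μ_3SAT = (l1?m, …, lk?m) belongs to the multi-prefix closure \overline{σ_L(i_φ)}. -/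
open scoped Classical

namespace RV

/-- A communication action: a lifeline, a kind (`true` = emission `!`,
`false` = reception `?`) and a message. -/
structure Action (Λ M : Type) where
  lifeline : Λ
  kind : Bool
  msg : M

/-- The interaction language: empty interaction, actions, the three loop
operators and the four binary operators. -/
inductive Interaction (Λ M : Type) : Type where
  | empty : Interaction Λ M
  | act : Action Λ M → Interaction Λ M
  | loopS : Interaction Λ M → Interaction Λ M
  | loopW : Interaction Λ M → Interaction Λ M
  | loopP : Interaction Λ M → Interaction Λ M
  | strict : Interaction Λ M → Interaction Λ M → Interaction Λ M
  | seq : Interaction Λ M → Interaction Λ M → Interaction Λ M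
  | par : Interaction Λ M → Interaction Λ M → Interaction Λ M
  | alt : Interaction Λ M → Interaction Λ M → Interaction Λ M

variable {Λ M : Type}

/-- `i ∈ 𝕀(L)` : all actions of `i` occur on lifelines belonging to `L`. -/
def Interaction.lifelinesIn (L : Set Λ) : Interaction Λ M → Prop
  | .empty => True
  | .act a => a.lifeline ∈ L
  | .loopS i => i.lifelinesIn L
  | .loopW i => i.lifelinesIn L
  | .loopP i => i.lifelinesIn L
  | .strict i1 i2 => i1.lifelinesIn L ∧ i2.lifelinesIn L
  | .seq i1 i2 => i1.lifelinesIn L ∧ i2.lifelinesIn L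
  | .par i1 i2 => i1.lifelinesIn L ∧ i2.lifelinesIn L
  | .alt i1 i2 => i1.lifelinesIn L ∧ i2.lifelinesIn L

/-- Lifeline removal `rmv_H` on interactions : actions occurring on a
lifeline of `H` are replaced by the empty interaction, the term structure
is preserved (no simplification). -/
noncomputable def rmv (H : Set Λ) : Interaction Λ M → Interaction Λ M
  | .empty => .empty
  | .act a => if a.lifeline ∈ H then .empty else .act a
  | .loopS i => .loopS (rmv H i)
  | .loopW i => .loopW (rmv H i)
  | .loopP i => .loopP (rmv H i)
  | .strict i1 i2 => .strict (rmv H i1) (rmv H i2)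
  | .seq i1 i2 => .seq (rmv H i1) (rmv H i2)
  | .par i1 i2 => .par (rmv H i1) (rmv H i2)
  | .alt i1 i2 => .alt (rmv H i1) (rmv H i2)

/-- The subterm of an interaction at a position (Dewey notation,
`false` = child 1, `true` = child 2); `none` when the position is invalid.
The positions of `i` are exactly those `p` with `(subtermAt i p).isSome`,
and the symbol `i(p)` is the head symbol of `subtermAt i p`. -/
def subtermAt : Interaction Λ M → List Bool → Option (Interaction Λ M)
  | i, [] => some i
  | .loopS i, false :: p => subtermAt i p
  | .loopW i, false :: p => subtermAt i p
  | .loopP i, false :: p => subtermAt i p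
  | .strict i1 _, false :: p => subtermAt i1 p
  | .strict _ i2, true :: p => subtermAt i2 p
  | .seq i1 _, false :: p => subtermAt i1 p
  | .seq _ i2, true :: p => subtermAt i2 p
  | .par i1 _, false :: p => subtermAt i1 p
  | .par _ i2, true :: p => subtermAt i2 p
  | .alt i1 _, false :: p => subtermAt i1 p
  | .alt _ i2, true :: p => subtermAt i2 p
  | _, _ => none

/-- A multi-trace : one local trace per lifeline (components on lifelines
outside the relevant set `L` are required to be empty, see
`MultiTrace.over'`). -/
abbrev MultiTrace (Λ M : Type) := Λ → List (Action Λ M)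

namespace MultiTrace

/-- `a ∧ μ` : prepend action `a` to the component of `μ` on `θ(a)`. -/
noncomputable def prepend (a : Action Λ M) (μ : MultiTrace Λ M) : MultiTrace Λ M :=
  fun l => if l = a.lifeline then a :: μ l else μ l

/-- `μ ∧ a` : append action `a` to the component of `μ` on `θ(a)`. -/
noncomputable def append (μ : MultiTrace Λ M) (a : Action Λ M) : MultiTrace Λ M :=
  fun l => if l = a.lifeline then μ l ++ [a] else μ l

/-- The empty multi-trace `ε_L`. -/
def eps : MultiTrace Λ M := fun _ => []

/-- `μ ∈ 𝕄(L)` : components vanish outside `L` and every action of the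
component on `l` occurs on `l`. -/
def over' (L : Set Λ) (μ : MultiTrace Λ M) : Prop :=
  (∀ l ∉ L, μ l = []) ∧ ∀ l, ∀ a ∈ μ l, a.lifeline = l

/-- Lifeline removal `rmv_H` on multi-traces : restriction of the tuple of
components to `L ∖ H` (removed components become empty). -/
noncomputable def rmv (H : Set Λ) (μ : MultiTrace Λ M) : MultiTrace Λ M :=
  fun l => if l ∈ H then [] else μ l

/-- Strict sequencing `μ1 ; μ2` of multi-traces : componentwise
concatenation. -/
def concat (μ1 μ2 : MultiTrace Λ M) : MultiTrace Λ M := fun l => μ1 l ++ μ2 l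

/-- Multi-prefix relation : componentwise word prefix. -/
def isPrefixOf (μ' μ : MultiTrace Λ M) : Prop := ∀ l, μ' l <+: μ l

end MultiTrace

/-- Interleaving `μ ∈ μ1 || μ2` of multi-traces. -/
inductive MTShuffle : MultiTrace Λ M → MultiTrace Λ M → MultiTrace Λ M → Prop where
  | nilL (μ : MultiTrace Λ M) : MTShuffle MultiTrace.eps μ μ
  | nilR (μ : MultiTrace Λ M) : MTShuffle μ MultiTrace.eps μ
  | left {μ1 μ2 μ : MultiTrace Λ M} (a : Action Λ M) :
      MTShuffle μ1 μ2 μ → MTShuffle (MultiTrace.prepend a μ1) μ2 (MultiTrace.prepend a μ)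
  | right {μ1 μ2 μ : MultiTrace Λ M} (a : Action Λ M) :
      MTShuffle μ1 μ2 μ → MTShuffle μ1 (MultiTrace.prepend a μ2) (MultiTrace.prepend a μ)

/-- Interleaving (shuffle) `t ∈ t1 || t2` of global traces (words). -/
inductive ListShuffle {α : Type} : List α → List α → List α → Prop where
  | nil : ListShuffle [] [] []
  | left {t1 t2 t : List α} (a : α) : ListShuffle t1 t2 t → ListShuffle (a :: t1) t2 (a :: t)
  | right {t1 t2 t : List α} (a : α) : ListShuffle t1 t2 t → ListShuffle t1 (a :: t2) (a :: t)

/-- Conflict predicate `t ⫫ l` : the trace `t` contains an action on `l`. -/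
def conflicts (t : List (Action Λ M)) (l : Λ) : Prop := ∃ a ∈ t, a.lifeline = l

/-- Weak sequencing `t ∈ t1 ;⫫ t2` of global traces : actions of `t2` may
be anticipated only when the remaining part of `t1` has no conflict on
their lifeline. -/
inductive WeakSeq : List (Action Λ M) → List (Action Λ M) → List (Action Λ M) → Prop where
  | nilL (t : List (Action Λ M)) : WeakSeq [] t t
  | nilR (t : List (Action Λ M)) : WeakSeq t [] t
  | left {t1 t2 t : List (Action Λ M)} (a1 : Action Λ M) :
      WeakSeq t1 t2 t → WeakSeq (a1 :: t1) t2 (a1 :: t)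
  | right {t1 t2 t : List (Action Λ M)} (a2 : Action Λ M) :
      ¬ conflicts t1 a2.lifeline → WeakSeq t1 t2 t → WeakSeq t1 (a2 :: t2) (a2 :: t)

/-- Projection `π_L` of a global trace onto a multi-trace. -/
noncomputable def proj : List (Action Λ M) → MultiTrace Λ M
  | [] => MultiTrace.eps
  | a :: t => MultiTrace.prepend a (proj t)

/-- Elementwise strict sequencing on sets of multi-traces. -/
def concatSet (S1 S2 : Set (MultiTrace Λ M)) : Set (MultiTrace Λ M) :=
  {μ | ∃ μ1 ∈ S1, ∃ μ2 ∈ S2, μ = MultiTrace.concat μ1 μ2}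

/-- Elementwise interleaving on sets of multi-traces. -/
def shuffleSet (S1 S2 : Set (MultiTrace Λ M)) : Set (MultiTrace Λ M) :=
  {μ | ∃ μ1 ∈ S1, ∃ μ2 ∈ S2, MTShuffle μ1 μ2 μ}

/-- `S^{;n}`. -/
def powConcat (S : Set (MultiTrace Λ M)) : ℕ → Set (MultiTrace Λ M)
  | 0 => {MultiTrace.eps}
  | n + 1 => concatSet S (powConcat S n)

/-- Kleene closure `S^{;*}`. -/
def kleeneConcat (S : Set (MultiTrace Λ M)) : Set (MultiTrace Λ M) := ⋃ n, powConcat S n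

/-- `S^{||n}`. -/
def powShuffle (S : Set (MultiTrace Λ M)) : ℕ → Set (MultiTrace Λ M)
  | 0 => {MultiTrace.eps}
  | n + 1 => shuffleSet S (powShuffle S n)

/-- Kleene closure `S^{||*}`. -/
def kleeneShuffle (S : Set (MultiTrace Λ M)) : Set (MultiTrace Λ M) := ⋃ n, powShuffle S n

/-- The multi-trace semantics `σ_L : 𝕀(L) → 𝒫(𝕄(L))`. -/
noncomputable def sem : Interaction Λ M → Set (MultiTrace Λ M)
  | .empty => {MultiTrace.eps}
  | .act a => {MultiTrace.prepend a MultiTrace.eps}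
  | .alt i1 i2 => sem i1 ∪ sem i2
  | .strict i1 i2 => concatSet (sem i1) (sem i2)
  | .seq i1 i2 => concatSet (sem i1) (sem i2)
  | .par i1 i2 => shuffleSet (sem i1) (sem i2)
  | .loopS i => kleeneConcat (sem i)
  | .loopW i => kleeneConcat (sem i)
  | .loopP i => kleeneShuffle (sem i)

/-- Multi-prefix closure `\overline{S}` of a set of multi-traces. -/
def prefixClosure (S : Set (MultiTrace Λ M)) : Set (MultiTrace Λ M) :=
  {μ' | ∃ μ ∈ S, MultiTrace.isPrefixOf μ' μ}

/-- Termination predicate `i ↓` : `i` accepts the empty (multi-)trace. -/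
inductive Terminates : Interaction Λ M → Prop where
  | empty : Terminates .empty
  | altL {i1 i2 : Interaction Λ M} : Terminates i1 → Terminates (.alt i1 i2)
  | altR {i1 i2 : Interaction Λ M} : Terminates i2 → Terminates (.alt i1 i2)
  | strict {i1 i2 : Interaction Λ M} : Terminates i1 → Terminates i2 → Terminates (.strict i1 i2)
  | seq {i1 i2 : Interaction Λ M} : Terminates i1 → Terminates i2 → Terminates (.seq i1 i2)
  | par {i1 i2 : Interaction Λ M} : Terminates i1 → Terminates i2 → Terminates (.par i1 i2)
  | loopS (i : Interaction Λ M) : Terminates (.loopS i)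
  | loopW (i : Interaction Λ M) : Terminates (.loopW i)
  | loopP (i : Interaction Λ M) : Terminates (.loopP i)

/-- Collision predicate `i ⫫̸ l` : every trace of `i` contains an action
on lifeline `l`. -/
inductive Collides : Interaction Λ M → Λ → Prop where
  | act {a : Action Λ M} {l : Λ} : a.lifeline = l → Collides (.act a) l
  | alt {i1 i2 : Interaction Λ M} {l : Λ} :
      Collides i1 l → Collides i2 l → Collides (.alt i1 i2) l
  | strictL {i1 i2 : Interaction Λ M} {l : Λ} : Collides i1 l → Collides (.strict i1 i2) l
  | strictR {i1 i2 : Interaction Λ M} {l : Λ} : Collides i2 l → Collides (.strict i1 i2) l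
  | seqL {i1 i2 : Interaction Λ M} {l : Λ} : Collides i1 l → Collides (.seq i1 i2) l
  | seqR {i1 i2 : Interaction Λ M} {l : Λ} : Collides i2 l → Collides (.seq i1 i2) l
  | parL {i1 i2 : Interaction Λ M} {l : Λ} : Collides i1 l → Collides (.par i1 i2) l
  | parR {i1 i2 : Interaction Λ M} {l : Λ} : Collides i2 l → Collides (.par i1 i2) l

/-- Pruning relation `i ≃^⫫_l i'`. -/
inductive Prunes : Interaction Λ M → Λ → Interaction Λ M → Prop where
  | empty (l : Λ) : Prunes .empty l .empty
  | act {a : Action Λ M} {l : Λ} : a.lifeline ≠ l → Prunes (.act a) l (.act a)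
  | strict {i1 i2 i1' i2' : Interaction Λ M} {l : Λ} :
      Prunes i1 l i1' → Prunes i2 l i2' → Prunes (.strict i1 i2) l (.strict i1' i2')
  | seq {i1 i2 i1' i2' : Interaction Λ M} {l : Λ} :
      Prunes i1 l i1' → Prunes i2 l i2' → Prunes (.seq i1 i2) l (.seq i1' i2')
  | par {i1 i2 i1' i2' : Interaction Λ M} {l : Λ} :
      Prunes i1 l i1' → Prunes i2 l i2' → Prunes (.par i1 i2) l (.par i1' i2')
  | altBoth {i1 i2 i1' i2' : Interaction Λ M} {l : Λ} :
      Prunes i1 l i1' → Prunes i2 l i2' → Prunes (.alt i1 i2) l (.alt i1' i2')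
  | altL {i1 i2 i1' : Interaction Λ M} {l : Λ} :
      Prunes i1 l i1' → Collides i2 l → Prunes (.alt i1 i2) l i1'
  | altR {i1 i2 i2' : Interaction Λ M} {l : Λ} :
      Prunes i2 l i2' → Collides i1 l → Prunes (.alt i1 i2) l i2'
  | loopS {i1 i1' : Interaction Λ M} {l : Λ} :
      Prunes i1 l i1' → Prunes (.loopS i1) l (.loopS i1')
  | loopW {i1 i1' : Interaction Λ M} {l : Λ} :
      Prunes i1 l i1' → Prunes (.loopW i1) l (.loopW i1')
  | loopP {i1 i1' : Interaction Λ M} {l : Λ} :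
      Prunes i1 l i1' → Prunes (.loopP i1) l (.loopP i1')
  | loopSElim {i1 : Interaction Λ M} {l : Λ} : Collides i1 l → Prunes (.loopS i1) l .empty
  | loopWElim {i1 : Interaction Λ M} {l : Λ} : Collides i1 l → Prunes (.loopW i1) l .empty
  | loopPElim {i1 : Interaction Λ M} {l : Λ} : Collides i1 l → Prunes (.loopP i1) l .empty

/-- Execution relation `i →[a@p] i'` of the structural operational
semantics (positions over `{1,2}` encoded by `false`/`true`). -/
inductive Executes : Interaction Λ M → Action Λ M → List Bool → Interaction Λ M → Prop where
  | act (a : Action Λ M) : Executes (.act a) a [] .empty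
  | altL {i1 i1' : Interaction Λ M} {a : Action Λ M} {p : List Bool} (i2 : Interaction Λ M) :
      Executes i1 a p i1' → Executes (.alt i1 i2) a (false :: p) i1'
  | altR {i2 i2' : Interaction Λ M} {a : Action Λ M} {p : List Bool} (i1 : Interaction Λ M) :
      Executes i2 a p i2' → Executes (.alt i1 i2) a (true :: p) i2'
  | parL {i1 i1' : Interaction Λ M} {a : Action Λ M} {p : List Bool} (i2 : Interaction Λ M) :
      Executes i1 a p i1' → Executes (.par i1 i2) a (false :: p) (.par i1' i2)
  | parR {i2 i2' : Interaction Λ M} {a : Action Λ M} {p : List Bool} (i1 : Interaction Λ M) :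
      Executes i2 a p i2' → Executes (.par i1 i2) a (true :: p) (.par i1 i2')
  | strictL {i1 i1' : Interaction Λ M} {a : Action Λ M} {p : List Bool} (i2 : Interaction Λ M) :
      Executes i1 a p i1' → Executes (.strict i1 i2) a (false :: p) (.strict i1' i2)
  | strictR {i1 i2 i2' : Interaction Λ M} {a : Action Λ M} {p : List Bool} :
      Terminates i1 → Executes i2 a p i2' → Executes (.strict i1 i2) a (true :: p) i2'
  | seqL {i1 i1' : Interaction Λ M} {a : Action Λ M} {p : List Bool} (i2 : Interaction Λ M) :
      Executes i1 a p i1' → Executes (.seq i1 i2) a (false :: p) (.seq i1' i2)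
  | seqR {i1 i1' i2 i2' : Interaction Λ M} {a : Action Λ M} {p : List Bool} :
      Prunes i1 a.lifeline i1' → Executes i2 a p i2' →
      Executes (.seq i1 i2) a (true :: p) (.seq i1' i2')
  | loopS {i1 i1' : Interaction Λ M} {a : Action Λ M} {p : List Bool} :
      Executes i1 a p i1' → Executes (.loopS i1) a (false :: p) (.strict i1' (.loopS i1))
  | loopW {i1 i1' i'' : Interaction Λ M} {a : Action Λ M} {p : List Bool} :
      Executes i1 a p i1' → Prunes (.loopW i1) a.lifeline i'' →
      Executes (.loopW i1) a (false :: p) (.seq i'' (.seq i1' (.loopW i1)))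
  | loopP {i1 i1' : Interaction Λ M} {a : Action Λ M} {p : List Bool} :
      Executes i1 a p i1' → Executes (.loopP i1) a (false :: p) (.par i1' (.loopP i1))

/-- Vertices of the analysis graph : `Ok` or a pair of an interaction and a
multi-trace over a current set of lifelines `L`. -/
inductive Vertex (Λ M : Type) : Type where
  | ok : Vertex Λ M
  | node : Set Λ → Interaction Λ M → MultiTrace Λ M → Vertex Λ M

/-- Rule `⤳_o` : emission of the `Ok` verdict on an empty multi-trace. -/
inductive StepOk : Vertex Λ M → Vertex Λ M → Prop where
  | mk (L : Set Λ) (i : Interaction Λ M) :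
      StepOk (.node L i MultiTrace.eps) .ok

/-- Rule `⤳_r` : removal of a set `H` of lifelines (with `∅ ⊊ H ⊊ L`)
whose components are all empty. -/
inductive StepRmv : Vertex Λ M → Vertex Λ M → Prop where
  | mk (L H : Set Λ) (i : Interaction Λ M) (μ : MultiTrace Λ M) :
      H.Nonempty → H ⊂ L → (∀ l ∈ H, μ l = []) →
      StepRmv (.node L i μ) (.node (L \ H) (rmv H i) (MultiTrace.rmv H μ))

/-- Rule `⤳_e` : simultaneous consumption of the action at the head of a
component of the multi-trace and execution of a matching action of the
interaction. -/
inductive StepExec : Vertex Λ M → Vertex Λ M → Prop where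
  | mk (L : Set Λ) (i i' : Interaction Λ M) (a : Action Λ M) (p : List Bool)
      (μ : MultiTrace Λ M) :
      a.lifeline ∈ L → Executes i a p i' →
      StepExec (.node L i (MultiTrace.prepend a μ)) (.node L i' μ)

/-- The transition relation `⤳` of the analysis graph. -/
def Step (v w : Vertex Λ M) : Prop := StepOk v w ∨ StepRmv v w ∨ StepExec v w

/-- One-unambiguity `a ⊑1∈ i` : in the projection of `i` onto `θ(a)`,
there is a unique position at which `a` is immediately executable. -/
def OneUnambiguous (L : Set Λ) (a : Action Λ M) (i : Interaction Λ M) : Prop :=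
  ∃! p : List Bool, ∃ i'' : Interaction Λ M, Executes (rmv (L \ {a.lifeline}) i) a p i''

/-- A local trace on lifeline `l` viewed as a multi-trace over `{l}`. -/
noncomputable def localMT (l : Λ) (w : List (Action Λ M)) : MultiTrace Λ M :=
  fun l' => if l' = l then w else []

/-- Right-nested `seq`-composition of a list of interactions (`∅` for the
empty list). -/
def seqComp : List (Interaction Λ M) → Interaction Λ M
  | [] => .empty
  | [i] => i
  | i :: rest => .seq i (seqComp rest)

/-- The operational trace semantics `σ_op(i)` generated by the two rules
`i↓ ⟹ ε ∈ σ_op(i)` and `i →[a@p] i' ∧ t ∈ σ_op(i') ⟹ a.t ∈ σ_op(i)`. -/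
inductive OpTrace : Interaction Λ M → List (Action Λ M) → Prop where
  | empty {i : Interaction Λ M} : Terminates i → OpTrace i []
  | step {i i' : Interaction Λ M} {a : Action Λ M} {p : List Bool} {t : List (Action Λ M)} :
      Executes i a p i' → OpTrace i' t → OpTrace i (a :: t)

end RV

namespace RV

/-- The interaction `i_ℓ` associated with a literal `ℓ` : the
seq-composition of the actions `l_j?m` over all clause indices `j` such
that `ℓ` occurs in clause `C_j` (and `∅` if `ℓ` occurs in no clause).
Literals are pairs `(x, b)` : the variable `x` with polarity `b`
(`true` = positive, `false` = negated); the lifelines are the clause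
indices `Fin k`; the unique message is `()` and the actions are
receptions (`kind = false`). -/
noncomputable def litInt (n k : ℕ) (C : Fin k → Finset (Fin n × Bool))
    (ℓ : Fin n × Bool) : Interaction (Fin k) Unit :=
  seqComp (((List.finRange k).filter (fun j => decide (ℓ ∈ C j))).map
    (fun j => Interaction.act ⟨j, false, ()⟩))

/-- The interaction
`i_φ = seq(alt(i_{x1},i_{¬x1}), seq(alt(i_{x2},i_{¬x2}), …, alt(i_{xn},i_{¬xn})…))`. -/
noncomputable def iphi (n k : ℕ) (C : Fin k → Finset (Fin n × Bool)) :
    Interaction (Fin k) Unit :=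
  seqComp ((List.finRange n).map
    (fun x => Interaction.alt (litInt n k C (x, true)) (litInt n k C (x, false))))

/-- The multi-trace `μ_3SAT = (l1?m, …, lk?m)`. -/
def muSAT (n k : ℕ) : MultiTrace (Fin k) Unit := fun j => [⟨j, false, ()⟩]

section Aux

variable {Λ M : Type}

lemma concat_eps_left (μ : MultiTrace Λ M) : MultiTrace.concat MultiTrace.eps μ = μ := by
  funext l; simp [MultiTrace.concat, MultiTrace.eps]

lemma concat_eps_right (μ : MultiTrace Λ M) : MultiTrace.concat μ MultiTrace.eps = μ := by
  funext l; simp [MultiTrace.concat, MultiTrace.eps]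

lemma concat_prepend_left (a : Action Λ M) (μ1 μ2 : MultiTrace Λ M) :
    MultiTrace.concat (MultiTrace.prepend a μ1) μ2
      = MultiTrace.prepend a (MultiTrace.concat μ1 μ2) := by
  funext l
  simp only [MultiTrace.concat, MultiTrace.prepend]
  by_cases h : l = a.lifeline <;> simp [h]

lemma proj_append (t1 t2 : List (Action Λ M)) :
    proj (t1 ++ t2) = MultiTrace.concat (proj t1) (proj t2) := by
  induction t1 with
  | nil => simp [proj, concat_eps_left]
  | cons a t ih => simp [proj, ih, concat_prepend_left]

lemma concatSet_eps_right (S : Set (MultiTrace Λ M)) :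
    concatSet S {MultiTrace.eps} = S := by
  ext μ
  constructor
  · rintro ⟨μ1, h1, μ2, h2, rfl⟩
    simp only [Set.mem_singleton_iff] at h2
    subst h2
    simpa [concat_eps_right] using h1
  · intro h
    exact ⟨μ, h, MultiTrace.eps, rfl, (concat_eps_right μ).symm⟩

lemma sem_seqComp_cons (i : Interaction Λ M) (rest : List (Interaction Λ M)) :
    sem (seqComp (i :: rest)) = concatSet (sem i) (sem (seqComp rest)) := by
  cases rest with
  | nil => simp [seqComp, sem, concatSet_eps_right]
  | cons b r => rfl

lemma sem_seqComp_acts {α : Type} (f : α → Action Λ M) (as : List α) :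
    sem (seqComp (as.map (fun x => Interaction.act (f x)))) = {proj (as.map f)} := by
  induction as with
  | nil => simp [seqComp, sem, proj]
  | cons a as ih =>
    rw [List.map_cons, sem_seqComp_cons, ih, List.map_cons]
    ext μ
    constructor
    · rintro ⟨μ1, h1, μ2, h2, rfl⟩
      simp only [sem, Set.mem_singleton_iff] at h1 h2
      subst h1; subst h2
      simp [proj, concat_prepend_left, concat_eps_left]
    · rintro rfl
      refine ⟨MultiTrace.prepend (f a) MultiTrace.eps, rfl, proj (as.map f), rfl, ?_⟩
      simp [proj, concat_prepend_left, concat_eps_left]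

lemma mem_proj {a : Action Λ M} {t : List (Action Λ M)} {l : Λ}
    (h : a ∈ proj t l) : a ∈ t ∧ a.lifeline = l := by
  induction t with
  | nil => simp [proj, MultiTrace.eps] at h
  | cons b t ih =>
    simp only [proj, MultiTrace.prepend] at h
    by_cases hl : l = b.lifeline
    · rw [if_pos hl] at h
      rcases List.mem_cons.mp h with rfl | h'
      · exact ⟨List.mem_cons_self, hl.symm⟩
      · obtain ⟨h1, h2⟩ := ih h'
        exact ⟨List.mem_cons_of_mem _ h1, h2⟩
    · rw [if_neg hl] at h
      obtain ⟨h1, h2⟩ := ih h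
      exact ⟨List.mem_cons_of_mem _ h1, h2⟩

lemma proj_ne_nil {a : Action Λ M} {t : List (Action Λ M)} {l : Λ}
    (ha : a ∈ t) (hl : a.lifeline = l) : proj t l ≠ [] := by
  induction t with
  | nil => simp at ha
  | cons b t ih =>
    simp only [proj, MultiTrace.prepend]
    rcases List.mem_cons.mp ha with rfl | h'
    · rw [if_pos hl.symm]; simp
    · by_cases h : l = b.lifeline
      · rw [if_pos h]; simp
      · rw [if_neg h]; exact ih h' 

end Aux

/-- The list of actions of the interaction `i_ℓ`. -/
noncomputable def litActs (n k : ℕ) (C : Fin k → Finset (Fin n × Bool))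
    (ℓ : Fin n × Bool) : List (Action (Fin k) Unit) :=
  ((List.finRange k).filter (fun j => decide (ℓ ∈ C j))).map (fun j => ⟨j, false, ()⟩)

lemma sem_litInt (n k : ℕ) (C : Fin k → Finset (Fin n × Bool)) (ℓ : Fin n × Bool) :
    sem (litInt n k C ℓ) = {proj (litActs n k C ℓ)} :=
  sem_seqComp_acts (fun j => (⟨j, false, ()⟩ : Action (Fin k) Unit)) _

/-- The global trace produced by an assignment `v`. -/
noncomputable def traceOf (n k : ℕ) (C : Fin k → Finset (Fin n × Bool))
    (v : Fin n → Bool) : List (Action (Fin k) Unit) :=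
  (List.finRange n).flatMap (fun x => litActs n k C (x, v x))

lemma sem_seqComp_alts (n k : ℕ) (C : Fin k → Finset (Fin n × Bool))
    (xs : List (Fin n)) (hx : xs.Nodup) (μ : MultiTrace (Fin k) Unit) :
    μ ∈ sem (seqComp (xs.map
        (fun x => Interaction.alt (litInt n k C (x, true)) (litInt n k C (x, false))))) ↔
      ∃ v : Fin n → Bool, μ = proj (xs.flatMap (fun x => litActs n k C (x, v x))) := by
  induction xs generalizing μ with
  | nil =>
    simp only [List.map_nil, seqComp, sem, Set.mem_singleton_iff, List.flatMap_nil, proj]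
    constructor
    · rintro rfl; exact ⟨fun _ => true, rfl⟩
    · rintro ⟨v, rfl⟩; rfl
  | cons x xs ih =>
    have hxs : xs.Nodup := hx.of_cons
    have hxmem : x ∉ xs := by
      simpa using (List.nodup_cons.mp hx).1
    rw [List.map_cons, sem_seqComp_cons]
    constructor
    · rintro ⟨μ1, h1, μ2, h2, rfl⟩
      obtain ⟨v', hv'⟩ := (ih hxs μ2).mp h2
      simp only [sem, sem_litInt, Set.mem_union, Set.mem_singleton_iff] at h1
      have : ∃ b : Bool, μ1 = proj (litActs n k C (x, b)) := by
        rcases h1 with h | h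
        · exact ⟨true, h⟩
        · exact ⟨false, h⟩
      obtain ⟨b, hb⟩ := this
      refine ⟨Function.update v' x b, ?_⟩
      have hcong : xs.flatMap (fun y => litActs n k C (y, Function.update v' x b y))
          = xs.flatMap (fun y => litActs n k C (y, v' y)) := by
        apply List.flatMap_congr
        intro y hy
        have hne : y ≠ x := fun h => hxmem (h ▸ hy)
        rw [Function.update_of_ne hne]
      rw [List.flatMap_cons, proj_append, hcong, ← hv', Function.update_self, ← hb]
    · rintro ⟨v, rfl⟩
      refine ⟨proj (litActs n k C (x, v x)), ?_, proj (xs.flatMap (fun y => litActs n k C (y, v y))),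
        (ih hxs _).mpr ⟨v, rfl⟩, ?_⟩
      · simp only [sem, sem_litInt, Set.mem_union, Set.mem_singleton_iff]
        cases h : v x
        · right; rw [← h]
        · left; rw [← h]
      · rw [List.flatMap_cons, proj_append]

lemma sem_iphi (n k : ℕ) (C : Fin k → Finset (Fin n × Bool)) (μ : MultiTrace (Fin k) Unit) :
    μ ∈ sem (iphi n k C) ↔ ∃ v : Fin n → Bool, μ = proj (traceOf n k C v) :=
  sem_seqComp_alts n k C (List.finRange n) (List.nodup_finRange n) μ

lemma mem_traceOf {n k : ℕ} {C : Fin k → Finset (Fin n × Bool)} {v : Fin n → Bool}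
    {a : Action (Fin k) Unit} (ha : a ∈ traceOf n k C v) :
    a = ⟨a.lifeline, false, ()⟩ ∧ ∃ x : Fin n, (x, v x) ∈ C a.lifeline := by
  simp only [traceOf, List.mem_flatMap, litActs, List.mem_map, List.mem_filter,
    List.mem_finRange, true_and, decide_eq_true_eq] at ha
  obtain ⟨x, ⟨j, hj, rfl⟩⟩ := ha
  exact ⟨rfl, x, hj⟩

/-- correctness of the 3SAT reduction : a 3-CNF formula
`φ = C1 ∧ … ∧ Ck` over variables `x1,…,xn` (each clause being a set of
three distinct literals) is satisfiable iff the multi-trace `μ_3SAT`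
belongs to `\overline{σ_L(i_φ)}`. -/
theorem statement13 (n k : ℕ) (C : Fin k → Finset (Fin n × Bool))
    (hC : ∀ j, (C j).card = 3) :
    (∃ v : Fin n → Bool, ∀ j : Fin k, ∃ lit ∈ C j, v lit.1 = lit.2) ↔
      muSAT n k ∈ prefixClosure (sem (iphi n k C)) := by
  have key : ∀ v : Fin n → Bool,
      MultiTrace.isPrefixOf (muSAT n k) (proj (traceOf n k C v)) ↔
        ∀ j : Fin k, ∃ x : Fin n, (x, v x) ∈ C j := by
    intro v
    constructor
    · intro h j
      obtain ⟨t, ht⟩ := h j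
      have hmem : (⟨j, false, ()⟩ : Action (Fin k) Unit) ∈ muSAT n k j ++ t := by
        simp [muSAT]
      rw [ht] at hmem
      obtain ⟨hmem', -⟩ := mem_proj hmem
      obtain ⟨-, x, hx⟩ := mem_traceOf hmem'
      exact ⟨x, hx⟩
    · intro h j
      obtain ⟨x, hx⟩ := h j
      have hmem : (⟨j, false, ()⟩ : Action (Fin k) Unit) ∈ traceOf n k C v := by
        simp only [traceOf, List.mem_flatMap]
        exact ⟨x, List.mem_finRange x, by simp [litActs, hx]⟩
      have hne : proj (traceOf n k C v) j ≠ [] := proj_ne_nil hmem rfl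
      cases hL : proj (traceOf n k C v) j with
      | nil => exact absurd hL hne
      | cons a t =>
        have ha : a ∈ proj (traceOf n k C v) j := by
          rw [hL]; exact List.mem_cons_self
        obtain ⟨ha1, ha2⟩ := mem_proj ha
        have haeq : a = ⟨j, false, ()⟩ := by
          obtain ⟨heq, -⟩ := mem_traceOf ha1
          rw [heq, ha2]
        rw [haeq]
        exact ⟨t, rfl⟩
  constructor
  · rintro ⟨v, hv⟩
    refine ⟨proj (traceOf n k C v), (sem_iphi n k C _).mpr ⟨v, rfl⟩, (key v).mpr ?_⟩
    intro j
    obtain ⟨lit, hlit, hveq⟩ := hv j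
    refine ⟨lit.1, ?_⟩
    rw [hveq]
    simpa using hlit
  · rintro ⟨μ, hμ, hpre⟩
    obtain ⟨v, rfl⟩ := (sem_iphi n k C μ).mp hμ
    refine ⟨v, fun j => ?_⟩
    obtain ⟨x, hx⟩ := (key v).mp hpre j
    exact ⟨(x, v x), hx, rfl⟩

end RV
end

section
/- If an action a is one-unambiguous in an interaction i ∈ 𝕀(L) and a is executable in i (i.e., there exists i' ∈ 𝕀(L) with i →[a] i'), then the follow-up is unique: there is exactly one interaction i' ∈ 𝕀(L) such that i →[a] i'. -/
open scoped Classical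

namespace RV

variable {Λ M : Type}

namespace MultiTrace

/-- `μ ∈ 𝕄(L)` : components vanish outside `L` and every action of the
component on `l` occurs on `l`. -/
def overL (L : Set Λ) (μ : MultiTrace Λ M) : Prop :=
  (∀ l ∉ L, μ l = []) ∧ ∀ l, ∀ a ∈ μ l, a.lifeline = l

end MultiTrace

end RV

namespace RV

variable {Λ M : Type}

theorem terminates_rmv {H : Set Λ} {i : Interaction Λ M} (h : Terminates i) :
    Terminates (rmv H i) := by
  induction h with
  | empty => exact .empty
  | altL _ ih => exact .altL ih
  | altR _ ih => exact .altR ih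
  | strict _ _ ih1 ih2 => exact .strict ih1 ih2
  | seq _ _ ih1 ih2 => exact .seq ih1 ih2
  | par _ _ ih1 ih2 => exact .par ih1 ih2
  | loopS i => exact .loopS _
  | loopW i => exact .loopW _
  | loopP i => exact .loopP _

theorem collides_rmv {H : Set Λ} {i : Interaction Λ M} {l : Λ} (hl : l ∉ H)
    (h : Collides i l) : Collides (rmv H i) l := by
  induction h with
  | @act a _ ha =>
      have : a.lifeline ∉ H := ha ▸ hl
      simp only [rmv, if_neg this]
      exact .act ha
  | alt _ _ ih1 ih2 => exact .alt (ih1 hl) (ih2 hl)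
  | strictL _ ih => exact .strictL (ih hl)
  | strictR _ ih => exact .strictR (ih hl)
  | seqL _ ih => exact .seqL (ih hl)
  | seqR _ ih => exact .seqR (ih hl)
  | parL _ ih => exact .parL (ih hl)
  | parR _ ih => exact .parR (ih hl)

theorem prunes_rmv {H : Set Λ} {i i' : Interaction Λ M} {l : Λ} (hl : l ∉ H)
    (h : Prunes i l i') : Prunes (rmv H i) l (rmv H i') := by
  induction h with
  | empty => exact .empty _
  | @act a _ ha =>
      by_cases hc : a.lifeline ∈ H
      · simp only [rmv, if_pos hc]; exact .empty _
      · simp only [rmv, if_neg hc]; exact .act ha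
  | strict _ _ ih1 ih2 => exact .strict (ih1 hl) (ih2 hl)
  | seq _ _ ih1 ih2 => exact .seq (ih1 hl) (ih2 hl)
  | par _ _ ih1 ih2 => exact .par (ih1 hl) (ih2 hl)
  | altBoth _ _ ih1 ih2 => exact .altBoth (ih1 hl) (ih2 hl)
  | altL _ hc ih => exact .altL (ih hl) (collides_rmv hl hc)
  | altR _ hc ih => exact .altR (ih hl) (collides_rmv hl hc)
  | loopS _ ih => exact .loopS (ih hl)
  | loopW _ ih => exact .loopW (ih hl)
  | loopP _ ih => exact .loopP (ih hl)
  | loopSElim hc => exact .loopSElim (collides_rmv hl hc)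
  | loopWElim hc => exact .loopWElim (collides_rmv hl hc)
  | loopPElim hc => exact .loopPElim (collides_rmv hl hc)

theorem executes_rmv {H : Set Λ} {i i' : Interaction Λ M} {a : Action Λ M}
    {p : List Bool} (hl : a.lifeline ∉ H) (h : Executes i a p i') :
    Executes (rmv H i) a p (rmv H i') := by
  induction h with
  | act a => simp only [rmv, if_neg hl]; exact .act a
  | altL _ _ ih => exact .altL _ (ih hl)
  | altR _ _ ih => exact .altR _ (ih hl)
  | parL _ _ ih => exact .parL _ (ih hl)
  | parR _ _ ih => exact .parR _ (ih hl)
  | strictL _ _ ih => exact .strictL _ (ih hl)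
  | strictR ht _ ih => exact .strictR (terminates_rmv ht) (ih hl)
  | seqL _ _ ih => exact .seqL _ (ih hl)
  | seqR hp _ ih => exact .seqR (prunes_rmv hl hp) (ih hl)
  | loopS _ ih => exact .loopS (ih hl)
  | loopW _ hp ih => exact .loopW (ih hl) (prunes_rmv hl hp)
  | loopP _ ih => exact .loopP (ih hl)

theorem not_collides_of_prunes {i i' : Interaction Λ M} {l : Λ}
    (h : Prunes i l i') : ¬ Collides i l := by
  induction h with
  | empty => intro hc; cases hc
  | act ha => intro hc; cases hc; exact ha ‹_›
  | strict _ _ ih1 ih2 => intro hc; cases hc with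
      | strictL h => exact ih1 h
      | strictR h => exact ih2 h
  | seq _ _ ih1 ih2 => intro hc; cases hc with
      | seqL h => exact ih1 h
      | seqR h => exact ih2 h
  | par _ _ ih1 ih2 => intro hc; cases hc with
      | parL h => exact ih1 h
      | parR h => exact ih2 h
  | altBoth _ _ ih1 ih2 => intro hc; cases hc with
      | alt h1 h2 => exact ih1 h1
  | altL _ _ ih => intro hc; cases hc with
      | alt h1 h2 => exact ih h1
  | altR _ _ ih => intro hc; cases hc with
      | alt h1 h2 => exact ih h2
  | loopS _ ih => intro hc; cases hc
  | loopW _ ih => intro hc; cases hc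
  | loopP _ ih => intro hc; cases hc
  | loopSElim _ => intro hc; cases hc
  | loopWElim _ => intro hc; cases hc
  | loopPElim _ => intro hc; cases hc

theorem prunes_det {i j1 j2 : Interaction Λ M} {l : Λ}
    (h1 : Prunes i l j1) (h2 : Prunes i l j2) : j1 = j2 := by
  induction h1 generalizing j2 with
  | empty => cases h2; rfl
  | act _ => cases h2; rfl
  | strict _ _ ih1 ih2 => cases h2 with
      | strict h1' h2' => rw [ih1 h1', ih2 h2']
  | seq _ _ ih1 ih2 => cases h2 with
      | seq h1' h2' => rw [ih1 h1', ih2 h2']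
  | par _ _ ih1 ih2 => cases h2 with
      | par h1' h2' => rw [ih1 h1', ih2 h2']
  | altBoth hp1 hp2 ih1 ih2 => cases h2 with
      | altBoth h1' h2' => rw [ih1 h1', ih2 h2']
      | altL h1' hc => exact absurd hc (not_collides_of_prunes hp2)
      | altR h2' hc => exact absurd hc (not_collides_of_prunes hp1)
  | altL hp hc ih => cases h2 with
      | altBoth h1' h2' => exact absurd hc (not_collides_of_prunes h2')
      | altL h1' _ => exact ih h1'
      | altR h2' hc' => exact absurd hc' (not_collides_of_prunes hp)
  | altR hp hc ih => cases h2 with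
      | altBoth h1' h2' => exact absurd hc (not_collides_of_prunes h1')
      | altL h1' hc' => exact absurd hc' (not_collides_of_prunes hp)
      | altR h2' _ => exact ih h2'
  | loopS hp ih => cases h2 with
      | loopS h' => rw [ih h']
      | loopSElim hc => exact absurd hc (not_collides_of_prunes hp)
  | loopW hp ih => cases h2 with
      | loopW h' => rw [ih h']
      | loopWElim hc => exact absurd hc (not_collides_of_prunes hp)
  | loopP hp ih => cases h2 with
      | loopP h' => rw [ih h']
      | loopPElim hc => exact absurd hc (not_collides_of_prunes hp)
  | loopSElim hc => cases h2 with
      | loopS h' => exact absurd hc (not_collides_of_prunes h')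
      | loopSElim _ => rfl
  | loopWElim hc => cases h2 with
      | loopW h' => exact absurd hc (not_collides_of_prunes h')
      | loopWElim _ => rfl
  | loopPElim hc => cases h2 with
      | loopP h' => exact absurd hc (not_collides_of_prunes h')
      | loopPElim _ => rfl

theorem executes_det {i j1 j2 : Interaction Λ M} {a : Action Λ M} {p : List Bool}
    (h1 : Executes i a p j1) (h2 : Executes i a p j2) : j1 = j2 := by
  induction h1 generalizing j2 with
  | act _ => cases h2; rfl
  | altL _ _ ih => cases h2 with
      | altL _ h' => exact ih h'
  | altR _ _ ih => cases h2 with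
      | altR _ h' => exact ih h'
  | parL _ _ ih => cases h2 with
      | parL _ h' => rw [ih h']
  | parR _ _ ih => cases h2 with
      | parR _ h' => rw [ih h']
  | strictL _ _ ih => cases h2 with
      | strictL _ h' => rw [ih h']
  | strictR _ _ ih => cases h2 with
      | strictR _ h' => exact ih h'
  | seqL _ _ ih => cases h2 with
      | seqL _ h' => rw [ih h']
  | seqR hp _ ih => cases h2 with
      | seqR hp' h' => rw [prunes_det hp hp', ih h']
  | loopS _ ih => cases h2 with
      | loopS h' => rw [ih h']
  | loopW _ hp ih => cases h2 with
      | loopW h' hp' => rw [prunes_det hp hp', ih h']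
  | loopP _ ih => cases h2 with
      | loopP h' => rw [ih h']

/-- if `a` is one-unambiguous in `i ∈ 𝕀(L)` and `a` is
executable in `i`, then the follow-up interaction is unique. -/
theorem statement15 {Λ M : Type} (L : Set Λ) (a : Action Λ M)
    (i : Interaction Λ M) (hi : i.lifelinesIn L) (ha : a.lifeline ∈ L)
    (h1 : OneUnambiguous L a i)
    (h2 : ∃ i' : Interaction Λ M, ∃ p : List Bool, Executes i a p i') :
    ∃! i' : Interaction Λ M, ∃ p : List Bool, Executes i a p i' := by
  obtain ⟨i', p, hex⟩ := h2
  refine ⟨i', ⟨p, hex⟩, ?_⟩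
  rintro j' ⟨q, hq⟩
  have hl : a.lifeline ∉ L \ {a.lifeline} := fun h => h.2 rfl
  obtain ⟨p0, hp0, huniq⟩ := h1
  have e1 := executes_rmv hl hex
  have e2 := executes_rmv hl hq
  have hp : p = p0 := huniq p ⟨_, e1⟩
  have hq' : q = p0 := huniq q ⟨_, e2⟩
  subst hp
  rw [hq'] at hq
  exact executes_det hq hex

end RV
end
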